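/- The set of critical points of E₀ is bounded: there exists R > 0 such that every critical point X ∈ ℂ^{N×m} of E₀ satisfies ‖X‖_F ≤ R. -/

import Mathlib

open Matrix
open scoped ComplexOrder

attribute [local instance] Matrix.frobeniusSeminormedAddCommGroup
  Matrix.frobeniusNormedAddCommGroup Matrix.frobeniusNormedSpace

/-- The OMM functional `E₀(X) = tr[(2I − X*X) X*HX]` (real-valued, since `H` is Hermitian). -/
noncomputable def E0 {N m : ℕ} (H : Matrix (Fin N) (Fin N) ℂ)
    (X : Matrix (Fin N) (Fin m) ℂ) : ℝ :=
  (((2 : ℂ) • (1 : Matrix (Fin m) (Fin m) ℂ) - Xᴴ * X) * (Xᴴ * H * X)).trace.re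

section Aux

/-- Matrix multiplication is a bounded bilinear map for the Frobenius norm. -/
lemma aux_isBBM (l p q : ℕ) :
    IsBoundedBilinearMap ℝ
      (fun f : Matrix (Fin l) (Fin p) ℂ × Matrix (Fin p) (Fin q) ℂ => f.1 * f.2) where
  add_left x₁ x₂ y := Matrix.add_mul x₁ x₂ y
  smul_left c x y := Matrix.smul_mul c x y
  add_right x y₁ y₂ := Matrix.mul_add x y₁ y₂
  smul_right c x y := Matrix.mul_smul x c y
  bound := ⟨1, one_pos, fun x y => by
    simpa using Matrix.frobenius_norm_mul x y⟩

/-- Conjugate transpose as a continuous ℝ-linear map. -/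
noncomputable def ctCLM (p q : ℕ) :
    Matrix (Fin p) (Fin q) ℂ →L[ℝ] Matrix (Fin q) (Fin p) ℂ :=
  LinearMap.toContinuousLinearMap
    { toFun := fun X => Xᴴ
      map_add' := fun X Y => conjTranspose_add X Y
      map_smul' := fun c X => by
        simp [Matrix.conjTranspose_smul] }

/-- Trace as a continuous ℝ-linear map. -/
noncomputable def trCLM (p : ℕ) : Matrix (Fin p) (Fin p) ℂ →L[ℝ] ℂ :=
  LinearMap.toContinuousLinearMap (Matrix.traceLinearMap (Fin p) ℝ ℂ)

set_option maxHeartbeats 800000 in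
lemma E0_differentiable {N m : ℕ} (H : Matrix (Fin N) (Fin N) ℂ) :
    Differentiable ℝ (E0 (m := m) H) := by
  have dct : Differentiable ℝ (fun X : Matrix (Fin N) (Fin m) ℂ => Xᴴ) :=
    (ctCLM N m).differentiable
  have dS : Differentiable ℝ (fun X : Matrix (Fin N) (Fin m) ℂ => Xᴴ * X) :=
    (aux_isBBM m N m).differentiable.comp (dct.prodMk differentiable_id)
  have dXH : Differentiable ℝ (fun X : Matrix (Fin N) (Fin m) ℂ => Xᴴ * H) :=
    (aux_isBBM m N N).differentiable.comp (dct.prodMk (differentiable_const H))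
  have dA : Differentiable ℝ (fun X : Matrix (Fin N) (Fin m) ℂ => Xᴴ * H * X) :=
    (aux_isBBM m N m).differentiable.comp (dXH.prodMk differentiable_id)
  have dL : Differentiable ℝ (fun X : Matrix (Fin N) (Fin m) ℂ =>
      (2 : ℂ) • (1 : Matrix (Fin m) (Fin m) ℂ) - Xᴴ * X) :=
    (differentiable_const _).sub dS
  have dP : Differentiable ℝ (fun X : Matrix (Fin N) (Fin m) ℂ =>
      ((2 : ℂ) • (1 : Matrix (Fin m) (Fin m) ℂ) - Xᴴ * X) * (Xᴴ * H * X)) :=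
    (aux_isBBM m m m).differentiable.comp (dL.prodMk dA)
  exact Complex.reCLM.differentiable.comp ((trCLM m).differentiable.comp dP)

/-- At a critical point the two trace quantities agree. -/
lemma critical_trace_eq {N m : ℕ} (H : Matrix (Fin N) (Fin N) ℂ)
    (X : Matrix (Fin N) (Fin m) ℂ) (hd : fderiv ℝ (E0 H) X = 0) :
    ((Xᴴ * X) * (Xᴴ * H * X)).trace.re = (Xᴴ * H * X).trace.re := by
  set a : ℝ := (Xᴴ * H * X).trace.re with ha
  set b : ℝ := ((Xᴴ * X) * (Xᴴ * H * X)).trace.re with hb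
  have hdiff : DifferentiableAt ℝ (E0 H) X := E0_differentiable H X
  have hF : HasFDerivAt (E0 H) 0 X := hd ▸ hdiff.hasFDerivAt
  have hg0 : HasDerivAt (fun t : ℝ => (1 + t) • X) ((1 : ℝ) • X) 0 :=
    HasDerivAt.smul_const (𝕜' := ℝ) (F := Matrix (Fin N) (Fin m) ℂ)
      ((hasDerivAt_id (0 : ℝ)).const_add 1) X
  have hg : HasDerivAt (fun t : ℝ => (1 + t) • X) X 0 := by
    simpa using hg0
  have hX0 : ((fun t : ℝ => (1 + t) • X)) 0 = X := by norm_num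
  have hF' : HasFDerivAt (𝕜 := ℝ) (E0 H) 0 ((fun t : ℝ => (1 + t) • X) 0) := by
    rw [hX0]; exact hF
  have hcomp : HasDerivAt (fun t : ℝ => E0 H ((1 + t) • X)) 0 0 := by
    exact (hF'.comp_hasDerivAt 0 hg).congr_deriv rfl
  have hfun : (fun t : ℝ => E0 H ((1 + t) • X)) =
      fun t : ℝ => (1 + t) ^ 2 * (2 * a) - (1 + t) ^ 4 * b := by
    funext t
    have hsm : (1 + t) • X = (((1 + t : ℝ) : ℂ)) • X := by
      rw [← algebraMap_smul ℂ (1 + t) X]; norm_num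
    set c : ℂ := ((1 + t : ℝ) : ℂ) with hc
    have hstar : star c = c := by simp [hc]
    have h1 : (c • X)ᴴ * H * (c • X) = (c ^ 2) • (Xᴴ * H * X) := by
      rw [conjTranspose_smul, hstar, Matrix.smul_mul, Matrix.smul_mul, Matrix.mul_smul,
        smul_smul, ← pow_two]
    have h2 : (c • X)ᴴ * (c • X) = (c ^ 2) • (Xᴴ * X) := by
      rw [conjTranspose_smul, hstar, Matrix.smul_mul, Matrix.mul_smul, smul_smul, ← pow_two]
    rw [hsm]
    unfold E0
    rw [h1, h2]
    simp only [sub_mul, Matrix.smul_mul, Matrix.mul_smul, Matrix.one_mul, smul_smul,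
      trace_sub, trace_smul, smul_eq_mul]
    have e2 : c ^ 2 * 2 = ((((1 + t) ^ 2 * 2 : ℝ)) : ℂ) := by rw [hc]; push_cast; ring
    have e4 : c ^ 2 * c ^ 2 = ((((1 + t) ^ 4 : ℝ)) : ℂ) := by rw [hc]; push_cast; ring
    rw [e2, e4, Complex.sub_re, Complex.re_ofReal_mul, Complex.re_ofReal_mul, ha, hb]
    ring
  have hpoly : HasDerivAt
      (fun t : ℝ => (1 + t) ^ 2 * (2 * a) - (1 + t) ^ 4 * b) (4 * a - 4 * b) 0 := by
    have h1 : HasDerivAt (fun t : ℝ => 1 + t) 1 0 := (hasDerivAt_id (0 : ℝ)).const_add 1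
    have h2 := (h1.pow 2).mul_const (2 * a)
    have h4 := (h1.pow 4).mul_const b
    have := h2.sub h4
    refine this.congr_deriv ?_
    push_cast
    ring
  rw [hfun] at hcomp
  have := hcomp.unique hpoly
  linarith

lemma trace_re_nonneg_of_posSemidef {n : ℕ} {M : Matrix (Fin n) (Fin n) ℂ}
    (hM : M.PosSemidef) : 0 ≤ M.trace.re := by
  have h : ∀ i, 0 ≤ (M i i).re := by
    intro i
    have := hM.re_dotProduct_nonneg (Pi.single i 1)
    simpa [dotProduct, Matrix.mulVec, Pi.single_apply, Finset.sum_ite_eq] using this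
  rw [Matrix.trace, Complex.re_sum]
  exact Finset.sum_nonneg fun i _ => h i

lemma trace_mul_re_nonneg {n : ℕ} {Q D : Matrix (Fin n) (Fin n) ℂ}
    (hQ : Q.PosSemidef) (hD : D.PosSemidef) : 0 ≤ (Q * D).trace.re := by
  obtain ⟨B, rfl⟩ : ∃ B : Matrix (Fin n) (Fin n) ℂ, Q = Bᴴ * B := by
    letI := Matrix.instCStarAlgebra (n := Fin n)
    letI := Matrix.instPartialOrder (𝕜 := ℂ) (n := Fin n)
    letI := Matrix.instStarOrderedRing (𝕜 := ℂ) (n := Fin n)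
    obtain ⟨B, hB⟩ := CStarAlgebra.nonneg_iff_eq_star_mul_self.mp hQ.nonneg
    exact ⟨B, hB⟩
  have : (Bᴴ * B * D).trace = (B * D * Bᴴ).trace := by
    rw [Matrix.mul_assoc, Matrix.trace_mul_comm, Matrix.mul_assoc]
  rw [this]
  exact trace_re_nonneg_of_posSemidef (hD.mul_mul_conjTranspose_same B)

/-- For a Hermitian positive definite matrix there is `c > 0` with `M - c•1` psd. -/
lemma exists_shift {n : ℕ} (hn : 0 < n) {M : Matrix (Fin n) (Fin n) ℂ}
    (hM : M.PosDef) : ∃ c : ℝ, 0 < c ∧ (M - c • (1 : Matrix (Fin n) (Fin n) ℂ)).PosSemidef := by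
  haveI : Nonempty (Fin n) := ⟨⟨0, hn⟩⟩
  have hherm := hM.1
  set μ := hherm.eigenvalues with hμ
  refine ⟨Finset.univ.inf' Finset.univ_nonempty μ, ?_, ?_⟩
  · rw [Finset.lt_inf'_iff]
    exact fun i _ => hM.eigenvalues_pos i
  · set c := Finset.univ.inf' Finset.univ_nonempty μ with hcdef
    set U : Matrix (Fin n) (Fin n) ℂ := (hherm.eigenvectorUnitary : Matrix (Fin n) (Fin n) ℂ)
    have hspec := hherm.spectral_theorem
    rw [Unitary.conjStarAlgAut_apply] at hspec
    have hU : U * star U = 1 := (Matrix.mem_unitaryGroup_iff).mp hherm.eigenvectorUnitary.2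
    have h1 : M - c • (1 : Matrix (Fin n) (Fin n) ℂ)
        = U * (Matrix.diagonal (fun i => ((μ i - c : ℝ) : ℂ))) * star U := by
      have hone : c • (1 : Matrix (Fin n) (Fin n) ℂ) = U * (c • 1) * star U := by
        rw [Matrix.mul_smul, Matrix.smul_mul, mul_one, hU]
      calc M - c • (1 : Matrix (Fin n) (Fin n) ℂ)
          = U * (Matrix.diagonal (RCLike.ofReal ∘ μ)) * star U - U * (c • 1) * star U := by
            rw [← hspec, ← hone]
        _ = U * ((Matrix.diagonal (RCLike.ofReal ∘ μ)) - c • 1) * star U := by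
            rw [Matrix.mul_sub, Matrix.sub_mul]
        _ = U * (Matrix.diagonal (fun i => ((μ i - c : ℝ) : ℂ))) * star U := by
            congr 1
            congr 1
            ext i j
            by_cases hij : i = j
            · subst hij
              simp [Matrix.diagonal_apply_eq, Matrix.one_apply_eq, Complex.ofReal_sub,
                Complex.real_smul]
            · simp [Matrix.diagonal_apply_ne _ hij, Matrix.one_apply_ne hij]
    rw [h1, Matrix.star_eq_conjTranspose]
    refine Matrix.PosSemidef.mul_mul_conjTranspose_same ?_ U
    rw [Matrix.posSemidef_diagonal_iff]
    intro i
    rw [← Complex.ofReal_zero, Complex.real_le_real, sub_nonneg]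
    exact Finset.inf'_le _ (Finset.mem_univ i)

lemma shift_trace_le {n : ℕ} {M : Matrix (Fin n) (Fin n) ℂ} {c : ℝ}
    (hshift : (M - c • (1 : Matrix (Fin n) (Fin n) ℂ)).PosSemidef)
    {Q : Matrix (Fin n) (Fin n) ℂ} (hQ : Q.PosSemidef) :
    c * Q.trace.re ≤ (Q * M).trace.re := by
  have h := trace_mul_re_nonneg hQ hshift
  rw [Matrix.mul_sub, Matrix.mul_smul, mul_one, trace_sub, trace_smul, Complex.sub_re] at h
  have : (c • Q.trace).re = c * Q.trace.re := by
    rw [Complex.real_smul, Complex.re_ofReal_mul]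
  rw [this] at h
  linarith

lemma re_trace_le_sqrt_mul_norm {n : ℕ} (M : Matrix (Fin n) (Fin n) ℂ) :
    M.trace.re ≤ Real.sqrt n * ‖M‖ := by
  have hnorm2 : ‖M‖ ^ 2 = ∑ i, ∑ j, ‖M i j‖ ^ 2 := by
    rw [Matrix.frobenius_norm_def, ← Real.rpow_natCast ((∑ i, ∑ j, ‖M i j‖ ^ 2) ^ ((1 : ℝ)/2)) 2,
      ← Real.rpow_mul (by positivity)]
    norm_num
  have hdiag : ∑ i, ‖M i i‖ ^ 2 ≤ ‖M‖ ^ 2 := by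
    rw [hnorm2]
    refine Finset.sum_le_sum fun i _ => ?_
    exact Finset.single_le_sum (f := fun j => ‖M i j‖ ^ 2) (fun j _ => by positivity)
      (Finset.mem_univ i)
  have h1 : M.trace.re ≤ ∑ i, ‖M i i‖ := by
    rw [Matrix.trace, Complex.re_sum]
    exact Finset.sum_le_sum fun i _ => (Complex.re_le_norm _)
  have h2 : (∑ i, ‖M i i‖) ^ 2 ≤ n * ∑ i, ‖M i i‖ ^ 2 := by
    simpa using sq_sum_le_card_mul_sum_sq (s := (Finset.univ : Finset (Fin n)))
      (f := fun i => ‖M i i‖)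
  have h3 : (∑ i, ‖M i i‖) ^ 2 ≤ n * ‖M‖ ^ 2 := by
    refine h2.trans ?_
    have : (0:ℝ) ≤ n := by positivity
    nlinarith
  have h4 : ∑ i, ‖M i i‖ ≤ Real.sqrt n * ‖M‖ := by
    have hnn : (0:ℝ) ≤ ∑ i, ‖M i i‖ := Finset.sum_nonneg fun i _ => norm_nonneg _
    have := Real.sqrt_le_sqrt h3
    rwa [Real.sqrt_sq hnn, Real.sqrt_mul (by positivity), Real.sqrt_sq (norm_nonneg _)] at this
  exact h1.trans h4

lemma trace_conjTranspose_mul_self_re {p q : ℕ} (B : Matrix (Fin p) (Fin q) ℂ) :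
    (Bᴴ * B).trace.re = ‖B‖ ^ 2 := by
  have hnorm2 : ‖B‖ ^ 2 = ∑ i, ∑ j, ‖B i j‖ ^ 2 := by
    rw [Matrix.frobenius_norm_def, ← Real.rpow_natCast ((∑ i, ∑ j, ‖B i j‖ ^ 2) ^ ((1 : ℝ)/2)) 2,
      ← Real.rpow_mul (by positivity)]
    norm_num
  rw [Matrix.trace, Complex.re_sum, hnorm2, Finset.sum_comm]
  refine Finset.sum_congr rfl fun j _ => ?_
  rw [Matrix.diag_apply, Matrix.mul_apply, Complex.re_sum]
  refine Finset.sum_congr rfl fun i _ => ?_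
  rw [Matrix.conjTranspose_apply, Complex.sq_norm, Complex.normSq_apply]
  simp [Complex.star_def, Complex.mul_re]

end Aux

set_option maxHeartbeats 1000000 in
/-- The set of critical points of `E₀` is bounded in the Frobenius norm. -/
theorem stmt8 {N m : ℕ} (hN : 0 < N) (hm : 0 < m) (hmN : m ≤ N)
    (H : Matrix (Fin N) (Fin N) ℂ) (hH : H.IsHermitian) (hneg : (-H).PosDef) :
    ∃ R > (0 : ℝ), ∀ X : Matrix (Fin N) (Fin m) ℂ,
      fderiv ℝ (E0 H) X = 0 → ‖X‖ ≤ R := by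
  obtain ⟨c, hc, hshift⟩ := exists_shift hN hneg
  set M0 : ℝ := Real.sqrt N * (Real.sqrt N * ‖H‖ / c) with hM0
  have hM0nn : 0 ≤ M0 := by positivity
  refine ⟨Real.sqrt M0 + 1, by positivity, fun X hd => ?_⟩
  set P : Matrix (Fin N) (Fin N) ℂ := X * Xᴴ with hPdef
  have hP : P.PosSemidef := Matrix.posSemidef_self_mul_conjTranspose X
  have hPP : (P * P).PosSemidef := by
    have := hP.pow 2
    rwa [pow_two] at this
  have hPH : P.IsHermitian := Matrix.isHermitian_mul_conjTranspose_self X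
  -- trace identities
  have ea : (Xᴴ * H * X).trace = (P * H).trace := by
    rw [Matrix.trace_mul_cycle]
  have eb : ((Xᴴ * X) * (Xᴴ * H * X)).trace = (P * P * H).trace := by
    calc ((Xᴴ * X) * (Xᴴ * H * X)).trace
        = (Xᴴ * (X * Xᴴ * H * X)).trace := by
          congr 1
          simp only [Matrix.mul_assoc]
      _ = ((X * Xᴴ * H * X) * Xᴴ).trace := Matrix.trace_mul_comm _ _
      _ = (P * H * P).trace := by
          congr 1
          simp only [hPdef, Matrix.mul_assoc]
      _ = (P * P * H).trace := by rw [Matrix.trace_mul_cycle]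
  -- critical point identity : b = a
  have hab := critical_trace_eq H X hd
  -- lower bound : c * ‖P‖² ≤ tr(P²·(−H)).re = −tr(P²H).re
  have hlow : c * ((P * P).trace.re) ≤ ((P * P) * (-H)).trace.re := shift_trace_le hshift hPP
  have hPPtr : (P * P).trace.re = ‖P‖ ^ 2 := by
    have : P * P = Pᴴ * P := by rw [hPH.eq]
    rw [this, trace_conjTranspose_mul_self_re]
  -- upper bound for tr(P·(−H)).re
  have hup : (P * (-H)).trace.re ≤ Real.sqrt N * (‖P‖ * ‖H‖) := by
    refine (re_trace_le_sqrt_mul_norm _).trans ?_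
    have : ‖P * (-H)‖ ≤ ‖P‖ * ‖-H‖ := Matrix.frobenius_norm_mul P (-H)
    rw [norm_neg] at this
    exact mul_le_mul_of_nonneg_left this (Real.sqrt_nonneg _)
  -- tie the two via the critical identity
  have hneg1 : ((P * P) * (-H)).trace.re = -(((Xᴴ * X) * (Xᴴ * H * X)).trace.re) := by
    rw [Matrix.mul_neg, trace_neg, Complex.neg_re, eb]
  have hneg2 : (P * (-H)).trace.re = -((Xᴴ * H * X).trace.re) := by
    rw [Matrix.mul_neg, trace_neg, Complex.neg_re, ea]
  have hkey : c * ‖P‖ ^ 2 ≤ Real.sqrt N * (‖P‖ * ‖H‖) := by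
    rw [← hPPtr]
    refine hlow.trans ?_
    rw [hneg1, hab, ← hneg2]
    exact hup
  -- bound on ‖P‖
  have hPbound : ‖P‖ ≤ Real.sqrt N * ‖H‖ / c := by
    rcases (norm_nonneg P).eq_or_lt with h0 | h0
    · rw [← h0]; positivity
    · rw [le_div_iff₀ hc]
      nlinarith
  -- bound on ‖X‖²
  have hXsq : ‖X‖ ^ 2 ≤ M0 := by
    have htr : (Xᴴ * X).trace.re = ‖X‖ ^ 2 := trace_conjTranspose_mul_self_re X
    have htr2 : (Xᴴ * X).trace = P.trace := Matrix.trace_mul_comm Xᴴ X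
    have h5 : P.trace.re ≤ Real.sqrt N * ‖P‖ := re_trace_le_sqrt_mul_norm P
    have h6 : Real.sqrt N * ‖P‖ ≤ M0 := by
      rw [hM0]
      exact mul_le_mul_of_nonneg_left hPbound (Real.sqrt_nonneg _)
    calc ‖X‖ ^ 2 = P.trace.re := by rw [← htr, htr2]
      _ ≤ Real.sqrt N * ‖P‖ := h5
      _ ≤ M0 := h6
  have hsq : ‖X‖ ^ 2 ≤ (Real.sqrt M0 + 1) ^ 2 := by
    have : M0 ≤ (Real.sqrt M0 + 1) ^ 2 := by
      have h := Real.sq_sqrt hM0nn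
      nlinarith [Real.sqrt_nonneg M0]
    linarith
  nlinarith [norm_nonneg X, Real.sqrt_nonneg M0]
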